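/- Let (V,[·,·]) be a finite-dimensional real Lie algebra with symplectic form θ, let f : (0,1] → GL(V), and define [x,y]_ε = f(ε)([f(ε)⁻¹(x), f(ε)⁻¹(y)]). Suppose the limit [x,y]₀ = lim_{ε→0⁺} [x,y]_ε exists for all x,y ∈ V (so that [·,·]₀ is a Lie bracket on V, the contraction of [·,·]). If there exists k such that θ(f(ε)(x), f(ε)(y)) = ε^k · θ(x,y) for all ε ∈ (0,1] and all x,y ∈ V, then θ is also a symplectic form on the contracted Lie algebra (V,[·,·]₀). -/

import Mathlib

/-- A symplectic form on a vector space `g` with respect to a (not necessarily Lie) bracket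
`mu`: bilinear, alternating, nondegenerate and closed with respect to `mu`. -/
def IsSymplecticFormWrt (g : Type*) [AddCommGroup g] [Module ℝ g]
    (mu : g → g → g) (θ : g → g → ℝ) : Prop :=
  (∀ (a : ℝ) (X Y Z : g), θ (a • X + Y) Z = a * θ X Z + θ Y Z) ∧
  (∀ (a : ℝ) (X Y Z : g), θ X (a • Y + Z) = a * θ X Y + θ X Z) ∧
  (∀ X : g, θ X X = 0) ∧
  (∀ X : g, (∀ Y : g, θ X Y = 0) → X = 0) ∧
  (∀ X Y Z : g, θ (mu X Y) Z + θ (mu Y Z) X + θ (mu Z X) Y = 0)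

/-- If `(V, ⁅·,·⁆)` is a finite-dimensional real symplectic Lie algebra with symplectic form
`θ`, `f : (0,1] → GL(V)`, the contracted bracket `⁅x,y⁆₀ = lim_{ε→0⁺} f ε ⁅(f ε)⁻¹ x, (f ε)⁻¹ y⁆`
exists, and `θ (f ε x) (f ε y) = ε ^ k * θ x y` for some `k` and all `ε ∈ (0,1]`, then `θ` is
also a symplectic form on the contracted Lie algebra `(V, ⁅·,·⁆₀)`. -/
theorem symplectic_of_contraction_of_scaling
    (V : Type*) [LieRing V] [LieAlgebra ℝ V] [FiniteDimensional ℝ V]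
    [TopologicalSpace V] [IsTopologicalAddGroup V] [ContinuousSMul ℝ V] [T2Space V]
    (θ : V → V → ℝ) (hθ : IsSymplecticFormWrt V (fun X Y => ⁅X, Y⁆) θ)
    (f : ℝ → (V ≃ₗ[ℝ] V)) (mu₀ : V → V → V)
    (hlim : ∀ x y : V,
      Filter.Tendsto (fun ε : ℝ => f ε ⁅(f ε).symm x, (f ε).symm y⁆)
        (nhdsWithin 0 (Set.Ioc (0:ℝ) 1)) (nhds (mu₀ x y)))
    (k : ℤ)
    (hk : ∀ ε ∈ Set.Ioc (0:ℝ) 1, ∀ x y : V, θ (f ε x) (f ε y) = ε ^ k * θ x y) :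
    IsSymplecticFormWrt V mu₀ θ := by

  obtain ⟨h1, h2, halt, hnd, hcl⟩ := hθ
  refine ⟨h1, h2, halt, hnd, ?_⟩
  have hzero : ∀ Z : V, θ 0 Z = 0 := by
    intro Z
    have := h1 1 0 0 Z
    simp at this
    linarith
  -- θ (·) Z is a continuous linear map
  have hcont : ∀ Z : V, Continuous (fun x : V => θ x Z) := by
    intro Z
    let L : V →ₗ[ℝ] ℝ :=
      { toFun := fun x => θ x Z
        map_add' := fun x y => by have := h1 1 x y Z; simpa using this
        map_smul' := fun a x => by have := h1 a x 0 Z; simpa [hzero] using this }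
    exact L.continuous_of_finiteDimensional
  intro X Y Z
  haveI : (nhdsWithin (0:ℝ) (Set.Ioc (0:ℝ) 1)).NeBot := by
    apply mem_closure_iff_nhdsWithin_neBot.mp
    have : (0:ℝ) ∈ closure (Set.Ioc (0:ℝ) 1) := by
      rw [closure_Ioc (by norm_num : (0:ℝ) ≠ 1)]
      exact ⟨le_refl _, by norm_num⟩
    exact this
  have htend : Filter.Tendsto
      (fun ε : ℝ => θ (f ε ⁅(f ε).symm X, (f ε).symm Y⁆) Z
        + θ (f ε ⁅(f ε).symm Y, (f ε).symm Z⁆) X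
        + θ (f ε ⁅(f ε).symm Z, (f ε).symm X⁆) Y)
      (nhdsWithin 0 (Set.Ioc (0:ℝ) 1))
      (nhds (θ (mu₀ X Y) Z + θ (mu₀ Y Z) X + θ (mu₀ Z X) Y)) := by
    exact (((hcont Z).tendsto _ |>.comp (hlim X Y)).add
      ((hcont X).tendsto _ |>.comp (hlim Y Z))).add
      ((hcont Y).tendsto _ |>.comp (hlim Z X))
  have heq : ∀ ε ∈ Set.Ioc (0:ℝ) 1,
      θ (f ε ⁅(f ε).symm X, (f ε).symm Y⁆) Z
        + θ (f ε ⁅(f ε).symm Y, (f ε).symm Z⁆) X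
        + θ (f ε ⁅(f ε).symm Z, (f ε).symm X⁆) Y = 0 := by
    intro ε hε
    have e1 : θ (f ε ⁅(f ε).symm X, (f ε).symm Y⁆) Z
        = ε ^ k * θ ⁅(f ε).symm X, (f ε).symm Y⁆ ((f ε).symm Z) := by
      conv_lhs => rw [show Z = f ε ((f ε).symm Z) from ((f ε).apply_symm_apply Z).symm]
      exact hk ε hε _ _
    have e2 : θ (f ε ⁅(f ε).symm Y, (f ε).symm Z⁆) X
        = ε ^ k * θ ⁅(f ε).symm Y, (f ε).symm Z⁆ ((f ε).symm X) := by
      conv_lhs => rw [show X = f ε ((f ε).symm X) from ((f ε).apply_symm_apply X).symm]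
      exact hk ε hε _ _
    have e3 : θ (f ε ⁅(f ε).symm Z, (f ε).symm X⁆) Y
        = ε ^ k * θ ⁅(f ε).symm Z, (f ε).symm X⁆ ((f ε).symm Y) := by
      conv_lhs => rw [show Y = f ε ((f ε).symm Y) from ((f ε).apply_symm_apply Y).symm]
      exact hk ε hε _ _
    rw [e1, e2, e3, ← mul_add, ← mul_add, hcl ((f ε).symm X) ((f ε).symm Y) ((f ε).symm Z),
      mul_zero]
  have htend0 : Filter.Tendsto
      (fun ε : ℝ => θ (f ε ⁅(f ε).symm X, (f ε).symm Y⁆) Z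
        + θ (f ε ⁅(f ε).symm Y, (f ε).symm Z⁆) X
        + θ (f ε ⁅(f ε).symm Z, (f ε).symm X⁆) Y)
      (nhdsWithin 0 (Set.Ioc (0:ℝ) 1)) (nhds 0) := by
    apply Filter.Tendsto.congr' _ tendsto_const_nhds
    filter_upwards [self_mem_nhdsWithin] with ε hε
    exact (heq ε hε).symm
  exact tendsto_nhds_unique htend htend0
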